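/- (Sum of features in the final norm.) Let λ > 0 and φ_1, …, φ_{k−1} ∈ ℝ^d, and set Σ_k := λ·I + Σ_{i=1}^{k−1} φ_i φ_iᵀ. Then Σ_{i=1}^{k−1} ‖φ_i‖²_{Σ_k⁻¹} ≤ d. -/

import Mathlib

open Matrix Finset

lemma vecMulVec_posSemidef {d : ℕ} (x : Fin d → ℝ) :
    (Matrix.vecMulVec x x).PosSemidef := by
  refine Matrix.posSemidef_iff_dotProduct_mulVec.mpr ⟨?_, ?_⟩
  · ext i j
    simp [Matrix.IsHermitian, Matrix.vecMulVec_apply, Matrix.conjTranspose_apply, mul_comm]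
  · intro y
    have : star y ⬝ᵥ (Matrix.vecMulVec x x *ᵥ y) = (x ⬝ᵥ y) * (x ⬝ᵥ y) := by
      simp [dotProduct, Matrix.mulVec, Matrix.vecMulVec_apply, Finset.mul_sum,
        Finset.sum_mul, mul_assoc, mul_comm, mul_left_comm]
    rw [this]
    exact mul_self_nonneg _

lemma smul_one_posDef {d : ℕ} {lam : ℝ} (hlam : 0 < lam) :
    (lam • (1 : Matrix (Fin d) (Fin d) ℝ)).PosDef := by
  have : lam • (1 : Matrix (Fin d) (Fin d) ℝ) = Matrix.diagonal (fun _ => lam) := by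
    rw [Matrix.smul_one_eq_diagonal]
  rw [this]
  exact Matrix.posDef_diagonal_iff.mpr (fun _ => hlam)

lemma quad_eq_trace {d : ℕ} (A : Matrix (Fin d) (Fin d) ℝ) (x : Fin d → ℝ) :
    x ⬝ᵥ (A *ᵥ x) = (A * Matrix.vecMulVec x x).trace := by
  simp only [Matrix.trace, Matrix.mul_apply, Matrix.vecMulVec_apply, dotProduct,
    Matrix.mulVec, Matrix.diag]
  refine Finset.sum_congr rfl fun i _ => ?_
  rw [Finset.mul_sum]
  exact Finset.sum_congr rfl fun j _ => by ring

/-- Sum of features in the final norm.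
For `Σ_k = λ I + ∑_{i=1}^{k-1} φ_i φ_iᵀ` with `λ > 0`, we have
`∑_{i=1}^{k-1} ‖φ_i‖²_{Σ_k⁻¹} ≤ d`, where `‖x‖²_{Σ_k⁻¹} = xᵀ Σ_k⁻¹ x`. -/
theorem sum_sq_features_final_norm_le
    (d k : ℕ) (lam : ℝ) (hlam : 0 < lam)
    (φ : Fin (k - 1) → (Fin d → ℝ))
    (Sig : Matrix (Fin d) (Fin d) ℝ)
    (hSig : Sig = lam • (1 : Matrix (Fin d) (Fin d) ℝ) +
      ∑ i, Matrix.vecMulVec (φ i) (φ i)) :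
    ∑ i, φ i ⬝ᵥ (Sig⁻¹ *ᵥ φ i) ≤ (d : ℝ) := by
  have hsum : (∑ i, Matrix.vecMulVec (φ i) (φ i)).PosSemidef := by
    refine Finset.sum_induction _ Matrix.PosSemidef
      (fun A B hA hB => Matrix.PosSemidef.add hA hB) Matrix.PosSemidef.zero
      (fun i _ => vecMulVec_posSemidef (φ i))
  have hPD : Sig.PosDef := by
    rw [hSig]; exact (smul_one_posDef hlam).add_posSemidef hsum
  have hinv : Sig⁻¹.PosDef := hPD.inv
  have hIsUnit := hPD.isUnit
  have hmul : Sig⁻¹ * Sig = 1 := Matrix.nonsing_inv_mul _ (Matrix.isUnit_iff_isUnit_det _ |>.1 hIsUnit)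
  -- rewrite the sum as a trace
  have key : ∑ i, φ i ⬝ᵥ (Sig⁻¹ *ᵥ φ i)
      = (Sig⁻¹ * ∑ i, Matrix.vecMulVec (φ i) (φ i)).trace := by
    rw [Finset.mul_sum, Matrix.trace_sum]
    exact Finset.sum_congr rfl fun i _ => quad_eq_trace _ _
  have hS : Sig⁻¹ * ∑ i, Matrix.vecMulVec (φ i) (φ i)
      = 1 - lam • Sig⁻¹ := by
    have : (∑ i, Matrix.vecMulVec (φ i) (φ i)) = Sig - lam • 1 := by
      rw [hSig]; abel
    rw [this, Matrix.mul_sub, hmul, Matrix.mul_smul, Matrix.mul_one]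
  rw [key, hS]
  have htr : 0 ≤ Sig⁻¹.trace := by
    rw [Matrix.trace]
    apply Finset.sum_nonneg
    intro i _
    have h := hinv.posSemidef.dotProduct_mulVec_nonneg (Pi.single i 1)
    simpa [dotProduct, Matrix.mulVec, Pi.single_apply] using h
  have : ((1 : Matrix (Fin d) (Fin d) ℝ) - lam • Sig⁻¹).trace
      = (d : ℝ) - lam * Sig⁻¹.trace := by
    simp [Matrix.trace_sub, Matrix.trace_smul, Matrix.trace_one, smul_eq_mul]
  rw [this]
  nlinarith
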